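/- arXiv:2105.09145 — 7 statements merged into one kernel-verified Lean document; each statement's English description precedes it below -/
import Mathlib

section
/- Let D be a discrete probability distribution with probabilities p_1 ≥ p_2 ≥ ... ≥ p_n sorted in decreasing order, and let H(D) = Σ_i p_i log(1/p_i) be its Shannon entropy (base e). For all γ ∈ (0,1) and z ∈ ℕ, if z ≥ γ · e^{H(D)/(1-γ)}, then Σ_{i=1}^{z} p_i ≥ γ. -/
/-- Entropy-concentration lemma: if `z ≥ γ·e^{H(D)/(1-γ)}`, then the `z` largest
probabilities of a sorted distribution carry mass at least `γ`. -/
theorem entropy_concentration (n : ℕ) (p : Fin n → ℝ) (hsort : Antitone p)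
    (hnn : ∀ i, 0 ≤ p i) (hsum : ∑ i, p i = 1)
    (γ : ℝ) (hγ : γ ∈ Set.Ioo (0 : ℝ) 1) (z : ℕ)
    (hz : γ * Real.exp ((∑ i, Real.negMulLog (p i)) / (1 - γ)) ≤ (z : ℝ)) :
    γ ≤ ∑ i ∈ Finset.univ.filter (fun i : Fin n => (i : ℕ) < z), p i := by
  obtain ⟨hγ0, hγ1⟩ := hγ
  by_contra hcon
  push_neg at hcon
  set H := ∑ i, Real.negMulLog (p i) with hHdef
  set F := Finset.univ.filter (fun i : Fin n => (i : ℕ) < z) with hF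
  set G := Finset.univ.filter (fun i : Fin n => ¬ (i : ℕ) < z) with hG
  set S := ∑ i ∈ F, p i with hS
  have hp1 : ∀ i, p i ≤ 1 := by
    intro i
    calc p i ≤ ∑ j, p j := Finset.single_le_sum (fun j _ => hnn j) (Finset.mem_univ i)
    _ = 1 := hsum
  have hH0 : 0 ≤ H := Finset.sum_nonneg fun i _ => Real.negMulLog_nonneg (hnn i) (hp1 i)
  have hd0 : 0 ≤ H / (1 - γ) := div_nonneg hH0 (by linarith)
  have hzpos : 0 < z := by
    rcases Nat.eq_zero_or_pos z with h | h
    · exfalso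
      rw [h] at hz
      push_cast at hz
      nlinarith [Real.exp_pos (H / (1 - γ))]
    · exact h
  have hSnn : 0 ≤ S := Finset.sum_nonneg fun i _ => hnn i
  have hzn : z < n := by
    by_contra h
    push_neg at h
    have hFu : F = Finset.univ := by
      ext i
      simp only [hF, Finset.mem_filter, Finset.mem_univ, true_and, iff_true]
      exact lt_of_lt_of_le i.isLt h
    have hS1 : S = 1 := by rw [hS, hFu]; exact hsum
    linarith
  have hnpos : 0 < n := lt_trans hzpos hzn
  -- p 0 > 0
  have hp0pos : 0 < p ⟨0, hnpos⟩ := by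
    by_contra h
    push_neg at h
    have hp00 : p ⟨0, hnpos⟩ = 0 := le_antisymm h (hnn _)
    have : ∀ i, p i = 0 := by
      intro i
      have := hsort (show (⟨0, hnpos⟩ : Fin n) ≤ i from Fin.mk_le_of_le_val (Nat.zero_le _))
      have := hnn i
      linarith [hp00]
    rw [Finset.sum_congr rfl (fun i _ => this i)] at hsum
    simp at hsum
  have h0F : (⟨0, hnpos⟩ : Fin n) ∈ F := by
    simp [hF, hzpos]
  have hSpos : 0 < S :=
    lt_of_lt_of_le hp0pos (Finset.single_le_sum (fun j _ => hnn j) h0F)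
  have hcard : F.card = z := by
    have : F = Finset.Iio (⟨z, hzn⟩ : Fin n) := by
      ext i
      simp [hF, Finset.mem_Iio, Fin.lt_def]
    rw [this, Fin.card_Iio]
  -- bound on tail probabilities
  have hbound : ∀ i : Fin n, z ≤ (i : ℕ) → p i ≤ S / z := by
    intro i hi
    rw [le_div_iff₀ (by positivity)]
    have : ∑ j ∈ F, p i ≤ ∑ j ∈ F, p j := by
      apply Finset.sum_le_sum
      intro j hj
      apply hsort
      rw [Fin.le_def]
      simp only [hF, Finset.mem_filter] at hj
      omega
    rw [Finset.sum_const, hcard, nsmul_eq_mul] at this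
    linarith
  -- tail sum
  have hGsum : ∑ i ∈ G, p i = 1 - S := by
    have := Finset.sum_filter_add_sum_filter_not Finset.univ (fun i : Fin n => (i : ℕ) < z) p
    rw [hsum] at this
    rw [← hF, ← hG] at this
    linarith [this]
  set L := Real.log (z / S) with hL
  have hHtail : (1 - S) * L ≤ H := by
    have h1 : ∑ i ∈ G, p i * L ≤ ∑ i ∈ G, Real.negMulLog (p i) := by
      apply Finset.sum_le_sum
      intro i hi
      simp only [hG, Finset.mem_filter] at hi
      rcases eq_or_lt_of_le (hnn i) with h | h
      · simp [← h, Real.negMulLog]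
      · have hle : p i ≤ S / z := hbound i (by omega)
        have : L ≤ Real.log (1 / p i) := by
          apply Real.log_le_log (by positivity)
          rw [div_le_div_iff₀ hSpos h]
          have hz' : (0:ℝ) < z := by positivity
          have he : (z:ℝ) * (S / z) = S := by field_simp
          nlinarith

        calc p i * L ≤ p i * Real.log (1 / p i) := by nlinarith
        _ = Real.negMulLog (p i) := by
            rw [one_div, Real.log_inv, Real.negMulLog]; ring
    have h2 : ∑ i ∈ G, Real.negMulLog (p i) ≤ H := by
      rw [hHdef, ← Finset.sum_filter_add_sum_filter_not Finset.univ (fun i : Fin n => (i : ℕ) < z)]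
      have : 0 ≤ ∑ i ∈ F, Real.negMulLog (p i) :=
        Finset.sum_nonneg fun i _ => Real.negMulLog_nonneg (hnn i) (hp1 i)
      rw [← hF, ← hG]
      linarith
    calc (1 - S) * L = ∑ i ∈ G, p i * L := by rw [← Finset.sum_mul, hGsum]
    _ ≤ H := le_trans h1 h2
  -- from hz
  have hlog : H / (1 - γ) ≤ Real.log ((z : ℝ) / γ) := by
    have h1 : Real.exp (H / (1 - γ)) ≤ (z : ℝ) / γ := by
      rw [le_div_iff₀ hγ0]
      linarith [hz]
    calc H / (1 - γ) = Real.log (Real.exp (H / (1 - γ))) := (Real.log_exp _).symm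
    _ ≤ Real.log ((z : ℝ) / γ) := Real.log_le_log (Real.exp_pos _) h1
  have hlogSγ : Real.log ((z : ℝ) / γ) < L := by
    apply Real.log_lt_log (by positivity)
    apply div_lt_div_of_pos_left (by positivity) hSpos hcon
  have hLpos : 0 < L := lt_of_le_of_lt (le_trans hd0 hlog) hlogSγ
  have hfin : H < H := by
    calc H = (1 - γ) * (H / (1 - γ)) := by
          rw [mul_comm, div_mul_cancel₀ H (by linarith : (1 - γ) ≠ 0)]
    _ ≤ (1 - γ) * Real.log ((z : ℝ) / γ) := by nlinarith
    _ < (1 - γ) * L := by nlinarith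
    _ ≤ (1 - S) * L := by nlinarith
    _ ≤ H := hHtail
  exact lt_irrefl _ hfin
end

section
/- Let p_1 ≥ p_2 ≥ ... ≥ p_n be a sorted probability distribution with entropy H = Σ_i p_i log(1/p_i), and suppose that for some z ∈ {1,...,n} and γ ∈ (0,1) we have Σ_{i=1}^{z} p_i < γ. Then H ≥ (1-γ) · log(z/γ), i.e., z < γ · e^{H/(1-γ)}. -/
/-- If the top-`z` mass of a sorted distribution is `< γ`, then the entropy is at
least `(1-γ)·log(z/γ)`, equivalently `z < γ·e^{H/(1-γ)}`. -/
theorem entropy_lower_bound_of_spread (n : ℕ) (p : Fin n → ℝ) (hsort : Antitone p)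
    (hnn : ∀ i, 0 ≤ p i) (hsum : ∑ i, p i = 1)
    (γ : ℝ) (hγ : γ ∈ Set.Ioo (0 : ℝ) 1)
    (z : ℕ) (hz1 : 1 ≤ z) (hzn : z ≤ n)
    (hlt : ∑ i ∈ Finset.univ.filter (fun i : Fin n => (i : ℕ) < z), p i < γ) :
    (1 - γ) * Real.log ((z : ℝ) / γ) ≤ ∑ i, Real.negMulLog (p i) ∧
      (z : ℝ) < γ * Real.exp ((∑ i, Real.negMulLog (p i)) / (1 - γ)) := by
  obtain ⟨hγ0, hγ1⟩ := hγ
  have hz0 : (0:ℝ) < z := by exact_mod_cast hz1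
  have hzn' : z - 1 < n := by omega
  set j : Fin n := ⟨z - 1, hzn'⟩ with hj
  set Hd := Finset.univ.filter (fun i : Fin n => (i : ℕ) < z) with hHd
  -- cardinality of head
  have hcard : Hd.card = z := by
    have : Hd = (Finset.range z).attachFin
        (fun m hm => lt_of_lt_of_le (Finset.mem_range.mp hm) hzn) := by
      ext i
      simp [hHd, Finset.mem_attachFin]
    rw [this, Finset.card_attachFin, Finset.card_range]
  -- z * p j ≤ head sum < γ
  have hpj : p j < γ / z := by
    have h1 : (z : ℝ) * p j ≤ ∑ i ∈ Hd, p i := by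
      calc (z : ℝ) * p j = ∑ _i ∈ Hd, p j := by
            rw [Finset.sum_const, hcard, nsmul_eq_mul]
        _ ≤ ∑ i ∈ Hd, p i := by
            apply Finset.sum_le_sum
            intro i hi
            apply hsort
            have h5 : (i : ℕ) < z := (Finset.mem_filter.mp hi).2
            simp only [Fin.le_def, hj, Fin.val_mk]
            omega
    rw [lt_div_iff₀ hz0]
    calc p j * z = z * p j := by ring
      _ ≤ ∑ i ∈ Hd, p i := h1
      _ < γ := hlt
  -- tail bound
  have htail : ∀ i ∈ Finset.univ.filter (fun i : Fin n => ¬ (i : ℕ) < z), p i < γ / z := by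
    intro i hi
    have : ¬ (i : ℕ) < z := (Finset.mem_filter.mp hi).2
    have hji : j ≤ i := by
      simp only [Fin.le_def, hj, Fin.val_mk]
      omega
    exact lt_of_le_of_lt (hsort hji) hpj
  -- tail mass > 1 - γ
  have hsplit : ∑ i ∈ Hd, p i
      + ∑ i ∈ Finset.univ.filter (fun i : Fin n => ¬ (i : ℕ) < z), p i = 1 := by
    rw [Finset.sum_filter_add_sum_filter_not, hsum]
  have htmass : 1 - γ < ∑ i ∈ Finset.univ.filter (fun i : Fin n => ¬ (i : ℕ) < z), p i := by
    have := hlt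
    linarith
  -- log (z/γ) > 0
  have hzg1 : (1:ℝ) < (z : ℝ) / γ := by
    rw [lt_div_iff₀ hγ0]
    calc 1 * γ = γ := one_mul γ
      _ < 1 := hγ1
      _ ≤ (z : ℝ) := by exact_mod_cast hz1
  have hlogpos : 0 < Real.log ((z : ℝ) / γ) := Real.log_pos hzg1
  -- each p i ≤ 1
  have hple1 : ∀ i, p i ≤ 1 := by
    intro i
    rw [← hsum]
    exact Finset.single_le_sum (fun i _ => hnn i) (Finset.mem_univ i)
  -- head entropy terms nonneg
  have hheadnn : ∀ i ∈ Hd, 0 ≤ Real.negMulLog (p i) := fun i _ =>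
    Real.negMulLog_nonneg (hnn i) (hple1 i)
  -- tail entropy terms ≥ p i * log(z/γ)
  have htailterm : ∀ i ∈ Finset.univ.filter (fun i : Fin n => ¬ (i : ℕ) < z),
      p i * Real.log ((z : ℝ) / γ) ≤ Real.negMulLog (p i) := by
    intro i hi
    rcases eq_or_lt_of_le (hnn i) with h0 | h0
    · simp [Real.negMulLog, ← h0]
    · have hpi : p i < γ / z := htail i hi
      have h1 : (z : ℝ) / γ ≤ (p i)⁻¹ := by
        have h := inv_anti₀ h0 (le_of_lt hpi)
        rwa [inv_div] at h
      have h2 : Real.log ((z : ℝ) / γ) ≤ Real.log (p i)⁻¹ :=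
        Real.log_le_log (by positivity) h1
      rw [Real.log_inv] at h2
      have := mul_le_mul_of_nonneg_left h2 (le_of_lt h0)
      simpa [Real.negMulLog, mul_comm] using this
  -- main entropy bound (strict)
  have hmain : (1 - γ) * Real.log ((z : ℝ) / γ) < ∑ i, Real.negMulLog (p i) := by
    have hsplitH : ∑ i, Real.negMulLog (p i)
        = ∑ i ∈ Hd, Real.negMulLog (p i)
          + ∑ i ∈ Finset.univ.filter (fun i : Fin n => ¬ (i : ℕ) < z), Real.negMulLog (p i) := by
      rw [Finset.sum_filter_add_sum_filter_not]
    have h3 : ∑ i ∈ Finset.univ.filter (fun i : Fin n => ¬ (i : ℕ) < z),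
        p i * Real.log ((z : ℝ) / γ)
        ≤ ∑ i ∈ Finset.univ.filter (fun i : Fin n => ¬ (i : ℕ) < z), Real.negMulLog (p i) :=
      Finset.sum_le_sum htailterm
    rw [← Finset.sum_mul] at h3
    have h4 : (1 - γ) * Real.log ((z : ℝ) / γ)
        < (∑ i ∈ Finset.univ.filter (fun i : Fin n => ¬ (i : ℕ) < z), p i)
            * Real.log ((z : ℝ) / γ) :=
      mul_lt_mul_of_pos_right htmass hlogpos
    have h5 : 0 ≤ ∑ i ∈ Hd, Real.negMulLog (p i) := Finset.sum_nonneg hheadnn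
    rw [hsplitH]
    linarith
  refine ⟨le_of_lt hmain, ?_⟩
  have h1γ : 0 < 1 - γ := by linarith
  have h6 : Real.log ((z : ℝ) / γ) < (∑ i, Real.negMulLog (p i)) / (1 - γ) := by
    rw [lt_div_iff₀ h1γ]
    calc Real.log ((z : ℝ) / γ) * (1 - γ) = (1 - γ) * Real.log ((z : ℝ) / γ) := by ring
      _ < _ := hmain
  have h7 : (z : ℝ) / γ < Real.exp ((∑ i, Real.negMulLog (p i)) / (1 - γ)) := by
    calc (z : ℝ) / γ = Real.exp (Real.log ((z : ℝ) / γ)) := by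
          rw [Real.exp_log (by positivity)]
      _ < _ := Real.exp_lt_exp.mpr h6
  rw [div_lt_iff₀ hγ0] at h7
  linarith [h7]
end

section
/- In a finite rooted tree where each node h is assigned a probability π(h) satisfying π(root) = 1 and for every internal node h, the sum of π over the children of h equals π(h), and where the depth of every node is at most L, the number of nodes h with π(h) ≥ p is at most (L+1)/p for any p > 0. -/
open Finset
open scoped Classical

/-- The children of node `h` in the tree `T` (histories are lists of actions). -/
noncomputable def children (T : Finset (List ℕ)) (h : List ℕ) : Finset (List ℕ) :=
  T.filter (fun h' => ∃ a : ℕ, h' = h ++ [a])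

/-- A finite rooted tree `T` (a prefix-closed finite set of histories containing
the root `[]`) together with reachability probabilities `π`: `π(root) = 1` and
for every internal node the children's probabilities sum to the parent's. -/
structure TreeProb (T : Finset (List ℕ)) (π : List ℕ → ℝ) : Prop where
  root_mem : [] ∈ T
  prefix_closed : ∀ h ∈ T, ∀ h' : List ℕ, h' <+: h → h' ∈ T
  nonneg : ∀ h ∈ T, 0 ≤ π h
  le_one : ∀ h ∈ T, π h ≤ 1
  root_one : π [] = 1
  internal_sum : ∀ h ∈ T, (children T h).Nonempty → π h = ∑ h' ∈ children T h, π h'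

lemma level_sum_le_one (T : Finset (List ℕ)) (π : List ℕ → ℝ) (hT : TreeProb T π) :
    ∀ ℓ : ℕ, ∑ h ∈ T.filter (fun h => h.length = ℓ), π h ≤ 1 := by
  intro ℓ
  induction ℓ with
  | zero =>
    have : T.filter (fun h => h.length = 0) = {([] : List ℕ)} := by
      ext h
      simp only [mem_filter, mem_singleton, List.length_eq_zero_iff]
      constructor
      · rintro ⟨_, rfl⟩; rfl
      · rintro rfl; exact ⟨hT.root_mem, rfl⟩
    rw [this, Finset.sum_singleton, hT.root_one]
  | succ n ih =>
    have hunion : T.filter (fun h => h.length = n + 1)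
        = (T.filter (fun h => h.length = n)).biUnion (children T) := by
      ext h'
      simp only [mem_filter, mem_biUnion, children]
      constructor
      · rintro ⟨hmem, hlen⟩
        have hne : h' ≠ [] := by intro e; simp [e] at hlen
        refine ⟨h'.dropLast, ⟨hT.prefix_closed h' hmem _ (List.dropLast_prefix h'), by
          simp [List.length_dropLast, hlen]⟩, hmem, h'.getLast hne, ?_⟩
        exact (List.dropLast_append_getLast hne).symm
      · rintro ⟨h, ⟨hhm, hlen⟩, hm, a, rfl⟩
        exact ⟨hm, by simp [hlen]⟩
    have hdisj : ∀ h1 ∈ T.filter (fun h => h.length = n), ∀ h2 ∈ T.filter (fun h => h.length = n),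
        h1 ≠ h2 → Disjoint (children T h1) (children T h2) := by
      intro h1 _ h2 _ hne
      rw [Finset.disjoint_left]
      intro x hx1 hx2
      simp only [children, mem_filter] at hx1 hx2
      obtain ⟨_, a, rfl⟩ := hx1
      obtain ⟨_, b, hb⟩ := hx2
      exact hne (List.append_inj_left' hb.symm (by rfl)).symm
    rw [hunion, Finset.sum_biUnion hdisj]
    calc ∑ h ∈ T.filter (fun h => h.length = n), ∑ h' ∈ children T h, π h'
        ≤ ∑ h ∈ T.filter (fun h => h.length = n), π h := by
          apply Finset.sum_le_sum
          intro h hh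
          rw [mem_filter] at hh
          rcases Finset.eq_empty_or_nonempty (children T h) with he | hne
          · rw [he, Finset.sum_empty]; exact hT.nonneg h hh.1
          · exact le_of_eq (hT.internal_sum h hh.1 hne).symm
      _ ≤ 1 := ih

/-- Counting lemma: in a tree of depth at most `L`, at most `(L+1)/p` nodes have
reachability probability at least `p`. -/
theorem count_high_prob_nodes (T : Finset (List ℕ)) (π : List ℕ → ℝ)
    (hT : TreeProb T π) (L : ℕ) (hdepth : ∀ h ∈ T, h.length ≤ L)
    (p : ℝ) (hp : 0 < p) :
    ((T.filter (fun h => p ≤ π h)).card : ℝ) ≤ (L + 1) / p := by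
  have hTsum : ∑ h ∈ T, π h ≤ (L + 1 : ℝ) := by
    have hT' : T = (Finset.range (L + 1)).biUnion
        (fun ℓ => T.filter (fun h => h.length = ℓ)) := by
      ext h
      simp only [mem_biUnion, mem_filter, mem_range]
      constructor
      · intro hm; exact ⟨h.length, Nat.lt_succ_of_le (hdepth h hm), hm, rfl⟩
      · rintro ⟨ℓ, _, hm, _⟩; exact hm
    have hdisj : ∀ a ∈ Finset.range (L + 1), ∀ b ∈ Finset.range (L + 1), a ≠ b →
        Disjoint (T.filter (fun h => h.length = a)) (T.filter (fun h => h.length = b)) := by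
      intro a _ b _ hab
      rw [Finset.disjoint_left]
      intro x hx1 hx2
      rw [mem_filter] at hx1 hx2
      exact hab (hx1.2 ▸ hx2.2)
    calc ∑ h ∈ T, π h
        = ∑ ℓ ∈ Finset.range (L + 1), ∑ h ∈ T.filter (fun h => h.length = ℓ), π h := by
          conv_lhs => rw [hT']
          exact Finset.sum_biUnion hdisj
      _ ≤ ∑ _ℓ ∈ Finset.range (L + 1), (1 : ℝ) :=
          Finset.sum_le_sum fun ℓ _ => level_sum_le_one T π hT ℓ
      _ = (L + 1 : ℝ) := by simp
  have hcard : p * ((T.filter (fun h => p ≤ π h)).card : ℝ)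
      ≤ ∑ h ∈ T, π h := by
    calc p * ((T.filter (fun h => p ≤ π h)).card : ℝ)
        = ∑ _h ∈ T.filter (fun h => p ≤ π h), p := by
          rw [Finset.sum_const, nsmul_eq_mul, mul_comm]
      _ ≤ ∑ h ∈ T.filter (fun h => p ≤ π h), π h :=
          Finset.sum_le_sum fun h hh => (mem_filter.mp hh).2
      _ ≤ ∑ h ∈ T, π h :=
          Finset.sum_le_sum_of_subset_of_nonneg (filter_subset _ _)
            (fun h hh _ => hT.nonneg h hh)
  rw [le_div_iff₀ hp]
  calc ((T.filter (fun h => p ≤ π h)).card : ℝ) * p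
      = p * ((T.filter (fun h => p ≤ π h)).card : ℝ) := mul_comm _ _
    _ ≤ ∑ h ∈ T, π h := hcard
    _ ≤ (L + 1 : ℝ) := hTsum
end

section
/- Let S(v) be an antichain of nodes in a finite rooted tree of depth ≤ L with reachability probabilities π, let P_norm = Σ_{h ∈ S(v)} π(h) > 0, and let 𝒮 be the distribution on S(v) with Pr[h] = π(h)/P_norm. Order S(v) = {h_1, h_2, ...} so that π(h_1) ≥ π(h_2) ≥ .... Then for every ε ∈ (0,1), taking z = ⌈(1-ε)·e^{H(𝒮)/ε}⌉, we have Σ_{i=1}^{z} π(h_i) ≥ (1-ε)·P_norm, where H(𝒮) is the entropy of 𝒮. -/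
open Finset
open scoped Classical

lemma key_cov (m : ℕ) (q : Fin m → ℝ) (hq0 : ∀ i, 0 ≤ q i) (hanti : Antitone q)
    (hsum : ∑ i, q i = 1) (ε : ℝ) (hε0 : 0 < ε) (hε1 : ε < 1) :
    1 - ε ≤ ∑ i ∈ Finset.univ.filter (fun i : Fin m =>
        (i : ℕ) < ⌈(1 - ε) * Real.exp ((∑ j, Real.negMulLog (q j)) / ε)⌉₊), q i := by
  classical
  set H := ∑ j, Real.negMulLog (q j) with hH
  set z := ⌈(1 - ε) * Real.exp (H / ε)⌉₊ with hz
  have hq1 : ∀ i, q i ≤ 1 := by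
    intro i
    calc q i ≤ ∑ j, q j := Finset.single_le_sum (fun j _ => hq0 j) (mem_univ i)
    _ = 1 := hsum
  have hHnn : 0 ≤ H := Finset.sum_nonneg fun j _ => Real.negMulLog_nonneg (hq0 j) (hq1 j)
  have hzpos : 0 < z := by
    rw [hz]
    apply Nat.ceil_pos.2
    exact mul_pos (by linarith) (Real.exp_pos _)
  have hz1 : (1 : ℝ) ≤ (z : ℝ) := by exact_mod_cast hzpos
  have hzge : (1 - ε) * Real.exp (H / ε) ≤ (z : ℝ) := Nat.le_ceil _
  set head := Finset.univ.filter (fun i : Fin m => (i : ℕ) < z) with hhead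
  set tail := Finset.univ.filter (fun i : Fin m => ¬ (i : ℕ) < z) with htail
  have hsplit : ∑ i ∈ head, q i + ∑ i ∈ tail, q i = 1 := by
    rw [← hsum]
    exact Finset.sum_filter_add_sum_filter_not _ _ _
  set t := ∑ i ∈ tail, q i with ht
  by_contra hcon
  push_neg at hcon
  have htε : ε < t := by linarith
  have hex : ∃ i ∈ tail, 0 < q i := by
    by_contra h
    push_neg at h
    have : t ≤ 0 := Finset.sum_nonpos h
    linarith
  obtain ⟨i0, hi0mem, hi0pos⟩ := hex
  have hi0z : z ≤ (i0 : ℕ) := by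
    have := (Finset.mem_filter.1 hi0mem).2
    omega
  have hzm : z < m := lt_of_le_of_lt hi0z i0.isLt
  set iz : Fin m := ⟨z, hzm⟩ with hiz
  have hqiz : 0 < q iz := lt_of_lt_of_le hi0pos (hanti (by simp [hiz, Fin.le_def, hi0z]))
  -- head card ≥ z
  have hcard : z ≤ head.card := by
    calc z = (Finset.range z).card := (Finset.card_range z).symm
    _ ≤ head.card := by
        apply Finset.card_le_card_of_injOn (fun n => if h : n < z then ⟨n, lt_trans h hzm⟩ else iz)
        · intro n hn
          have hn' := Finset.mem_range.1 hn
          simp only [dif_pos hn']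
          simp [hhead, hn']
        · intro a ha b hb hab
          have ha' := Finset.mem_range.1 ha
          have hb' := Finset.mem_range.1 hb
          simp only [dif_pos ha', dif_pos hb'] at hab
          simpa [Fin.mk.injEq] using hab
  have hheadge : (z : ℝ) * q iz ≤ ∑ i ∈ head, q i := by
    have h1 : ∀ j ∈ head, q iz ≤ q j := by
      intro j hj
      apply hanti
      have : (j : ℕ) < z := (Finset.mem_filter.1 hj).2
      simp [Fin.le_def, hiz]
      omega
    calc (z : ℝ) * q iz ≤ (head.card : ℝ) * q iz := by
          apply mul_le_mul_of_nonneg_right _ (le_of_lt hqiz)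
          exact_mod_cast hcard
    _ ≤ ∑ i ∈ head, q i := by
          have := Finset.card_nsmul_le_sum head q (q iz) h1
          simpa [nsmul_eq_mul] using this
  have hzq : (z : ℝ) * q iz ≤ 1 - t := by linarith
  have h1t : 0 < 1 - t := lt_of_lt_of_le (by positivity) hzq
  -- tail entropy bound
  set A := Real.log ((z : ℝ) / (1 - t)) with hA
  have hqle : ∀ i ∈ tail, q i ≤ (1 - t) / z := by
    intro i hi
    have hiz' : iz ≤ i := by
      have : z ≤ (i : ℕ) := by
        have := (Finset.mem_filter.1 hi).2; omega
      simp [Fin.le_def, hiz, this]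
    have : q i ≤ q iz := hanti hiz'
    have hzpos' : (0:ℝ) < z := by exact_mod_cast hzpos
    calc q i ≤ q iz := this
    _ ≤ (1 - t) / z := by rw [le_div_iff₀ hzpos']; linarith [hzq]
  have htermb : ∀ i ∈ tail, q i * A ≤ Real.negMulLog (q i) := by
    intro i hi
    rcases eq_or_lt_of_le (hq0 i) with h0 | h0
    · simp [Real.negMulLog, ← h0]
    · rw [Real.negMulLog]
      have h1 : A ≤ -Real.log (q i) := by
        rw [← Real.log_inv]
        apply Real.log_le_log (by positivity)
        rw [div_le_iff₀ h1t, inv_mul_eq_div, le_div_iff₀ h0]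
        have := hqle i hi
        have hzpos' : (0:ℝ) < z := by exact_mod_cast hzpos
        rw [le_div_iff₀ hzpos'] at this
        linarith
      nlinarith [h0, h1]
  have htailH : t * A ≤ H := by
    have h1 : ∑ i ∈ tail, q i * A ≤ ∑ i ∈ tail, Real.negMulLog (q i) :=
      Finset.sum_le_sum htermb
    have h2 : ∑ i ∈ tail, q i * A = t * A := by rw [← Finset.sum_mul]
    have h3 : ∑ i ∈ tail, Real.negMulLog (q i) ≤ H := by
      rw [hH, ← Finset.sum_filter_add_sum_filter_not Finset.univ (fun i : Fin m => ¬ (i:ℕ) < z)]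
      have : 0 ≤ ∑ i ∈ Finset.univ.filter (fun i : Fin m => ¬¬(i:ℕ) < z), Real.negMulLog (q i) :=
        Finset.sum_nonneg fun i _ => Real.negMulLog_nonneg (hq0 i) (hq1 i)
      linarith
    linarith
  set B := Real.log ((z : ℝ) / (1 - ε)) with hB
  have hBnn : 0 ≤ B := by
    apply Real.log_nonneg
    rw [le_div_iff₀ (by linarith)]
    linarith
  have hAB : B < A := by
    apply Real.log_lt_log (div_pos (by exact_mod_cast hzpos) (by linarith))
    apply div_lt_div_of_pos_left (by exact_mod_cast hzpos) h1t
    linarith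
  have hεB : H ≤ ε * B := by
    have h1 : Real.exp (H / ε) ≤ (z : ℝ) / (1 - ε) := by
      rw [le_div_iff₀ (by linarith)]
      linarith [hzge]
    have h2 : H / ε ≤ B := by
      calc H / ε = Real.log (Real.exp (H / ε)) := (Real.log_exp _).symm
      _ ≤ B := Real.log_le_log (Real.exp_pos _) h1
    calc H = ε * (H / ε) := by field_simp
    _ ≤ ε * B := by nlinarith
  nlinarith [htailH, hAB, htε, hεB, hBnn, hε0]

/-- Combinatorial core of the randomness vs. precomputation trade-off: for an
antichain `hist 0, hist 1, ...` ordered by decreasing reach probability, the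
`z = ⌈(1-ε)·e^{H(𝒮)/ε}⌉` most likely elements carry a `(1-ε)` fraction of the
total reach probability `P_norm`, where `𝒮` is the normalized distribution. -/
theorem antichain_entropy_coverage (T : Finset (List ℕ)) (π : List ℕ → ℝ)
    (hT : TreeProb T π) (L : ℕ) (hdepth : ∀ h ∈ T, h.length ≤ L)
    (m : ℕ) (hist : Fin m → List ℕ) (hinj : Function.Injective hist)
    (hmem : ∀ i, hist i ∈ T)
    (hanti : ∀ i j, i ≠ j → ¬ hist i <+: hist j)
    (hsorted : Antitone (fun i => π (hist i)))
    (hP : 0 < ∑ i, π (hist i))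
    (ε : ℝ) (hε : ε ∈ Set.Ioo (0 : ℝ) 1) :
    (1 - ε) * (∑ i, π (hist i)) ≤
      ∑ i ∈ Finset.univ.filter (fun i : Fin m =>
        (i : ℕ) <
          ⌈(1 - ε) * Real.exp
            ((∑ j, Real.negMulLog (π (hist j) / (∑ i, π (hist i)))) / ε)⌉₊),
        π (hist i) := by
  obtain ⟨hε0, hε1⟩ := hε
  set P := ∑ i, π (hist i) with hPdef
  have hPne : P ≠ 0 := ne_of_gt hP
  have hq0 : ∀ i, 0 ≤ π (hist i) / P := fun i => div_nonneg (hT.nonneg _ (hmem i)) (le_of_lt hP)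
  have hqanti : Antitone (fun i => π (hist i) / P) := fun i j hij =>
    div_le_div_of_nonneg_right (hsorted hij) (le_of_lt hP)
  have hqsum : ∑ i, π (hist i) / P = 1 := by
    rw [← Finset.sum_div, ← hPdef, div_self hPne]
  have hkey := key_cov m (fun i => π (hist i) / P) hq0 hqanti hqsum ε hε0 hε1

  have := mul_le_mul_of_nonneg_right hkey (le_of_lt hP)
  calc (1 - ε) * P ≤ (∑ i ∈ Finset.univ.filter (fun i : Fin m =>
        (i : ℕ) < ⌈(1 - ε) * Real.exp ((∑ j, Real.negMulLog (π (hist j) / P)) / ε)⌉₊),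
        π (hist i) / P) * P := this
  _ = ∑ i ∈ Finset.univ.filter (fun i : Fin m =>
        (i : ℕ) < ⌈(1 - ε) * Real.exp ((∑ j, Real.negMulLog (π (hist j) / P)) / ε)⌉₊),
        π (hist i) := by
      rw [Finset.sum_mul]
      exact Finset.sum_congr rfl fun i _ => div_mul_cancel₀ _ hPne
end

section
/- Suppose for all ε ∈ (0,1) and some fixed v', λ, L > 0 with λL < e^{-5} the inequality v ≥ (1-ε)v' − (1-ε)·L·λ·e^{H/ε} holds, where v' > v + 0.01 and v' ≤ 1. Then H ≥ (v' − v − 0.01)·(log(1/(λL)) − 5). -/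
/-- Arithmetic core of Theorem 2: if `v ≥ (1-ε)v' - (1-ε)Lλe^{H/ε}` holds for
all `ε ∈ (0,1)`, with `λL < e^{-5}` and `v' > v + 0.01`, then
`H ≥ (v' - v - 0.01)(log(1/(λL)) - 5)`. -/
theorem entropy_bound_arith (v v' lam L H : ℝ) (hv : v ∈ Set.Icc (0 : ℝ) 1)
    (hlam : 0 < lam) (hL : 0 < L) (hsmall : lam * L < Real.exp (-5))
    (hv' : v + 0.01 < v') (hv'1 : v' ≤ 1) (hH : 0 ≤ H)
    (hineq : ∀ ε ∈ Set.Ioo (0 : ℝ) 1,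
      (1 - ε) * v' - (1 - ε) * L * lam * Real.exp (H / ε) ≤ v) :
    (v' - v - 0.01) * (Real.log (1 / (lam * L)) - 5) ≤ H := by
  obtain ⟨hv0, hv1⟩ := hv
  have hd : (0:ℝ) < v' - 0.007 := by linarith
  set ε : ℝ := (v' - v - 0.01) / (v' - 0.007) with hεdef
  have hεnum : (0:ℝ) < v' - v - 0.01 := by linarith
  have hε0 : 0 < ε := div_pos hεnum hd
  have hε1 : ε < 1 := by
    rw [hεdef, div_lt_one hd]; linarith
  have h1ε : 0 < 1 - ε := by linarith
  have hkey : (1 - ε) * (v' - 0.007) = v + 0.003 := by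
    rw [hεdef]; field_simp; ring
  have hspec := hineq ε ⟨hε0, hε1⟩
  have hLlam : 0 < lam * L := mul_pos hlam hL
  have hexp : 0.007 ≤ lam * L * Real.exp (H / ε) := by
    have h1 : (1 - ε) * (lam * L * Real.exp (H / ε)) ≥ (1 - ε) * v' - v := by
      nlinarith [hspec]
    have h2 : (1 - ε) * v' - v = 0.007 * (1 - ε) + 0.003 := by nlinarith [hkey]
    nlinarith [Real.exp_pos (H / ε), h1ε]
  have hexp2 : Real.exp (-5) < 0.007 := by
    have h5 : Real.exp (5:ℝ) = (Real.exp 1)^(5:ℕ) := by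
      rw [← Real.exp_nat_mul]; norm_num
    have hgt : (142.9:ℝ) < Real.exp (5:ℝ) := by
      have he : (2.7182818283:ℝ) ≤ Real.exp 1 := Real.exp_one_gt_d9.le
      have hp : (2.7182818283:ℝ)^(5:ℕ) ≤ (Real.exp 1)^(5:ℕ) :=
        pow_le_pow_left₀ (by norm_num) he 5
      rw [h5]; nlinarith [hp]
    have : Real.exp (-5:ℝ) = 1 / Real.exp 5 := by
      rw [Real.exp_neg]; rw [one_div]
    rw [this]
    rw [div_lt_iff₀ (by positivity)]
    nlinarith
  -- take logs
  have hHε : Real.log 0.007 - Real.log (lam * L) ≤ H / ε := by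
    have := Real.log_le_log (by norm_num) hexp
    rw [Real.log_mul (ne_of_gt hLlam) (ne_of_gt (Real.exp_pos _)),
      Real.log_exp] at this
    linarith
  have hlog7 : (-5:ℝ) ≤ Real.log 0.007 := by
    have := Real.log_le_log (Real.exp_pos (-5)) hexp2.le
    rwa [Real.log_exp] at this
  have hloginv : Real.log (1 / (lam * L)) = - Real.log (lam * L) := by
    rw [one_div, Real.log_inv]
  have hlogsmall : Real.log (lam * L) < -5 := by
    have := Real.log_lt_log hLlam hsmall
    rwa [Real.log_exp] at this
  have hA : 0 ≤ Real.log (1 / (lam * L)) - 5 := by rw [hloginv]; linarith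
  have hA2 : Real.log (1 / (lam * L)) - 5 ≤ Real.log 0.007 - Real.log (lam * L) := by
    rw [hloginv]; linarith
  have hεge : v' - v - 0.01 ≤ ε := by
    rw [hεdef, le_div_iff₀ hd]
    nlinarith
  have hchain : (v' - v - 0.01) * (Real.log (1 / (lam * L)) - 5) ≤ ε * (H / ε) :=
    mul_le_mul hεge (le_trans hA2 hHε) hA (le_of_lt hε0)
  rwa [mul_div_cancel₀ H (ne_of_gt hε0)] at hchain
end

section
/- Consider a finite rooted tree where each node h has a weight w(h) ∈ [0,1] (an estimated value times reach probability) and a cost λ > 0, and define recursively bestvalue(h) = w(h) if h is a leaf, and bestvalue(h) = max( Σ_{h' child of h} bestvalue(h') − λ, w(h) ) otherwise. Then bestvalue(root) = max over all prefix-closed subtrees T containing the root (possibly empty, interpreted as bestvalue = w(root)) of [ Σ_{h ∈ boundary(T)} w(h) − λ·|internal(T)| ], where internal(T) are the nodes of T at which the 'expand' choice is made and boundary(T) are the nodes where expansion stops. -/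
open Finset
open scoped Classical

lemma child_of_ne {r g : List ℕ} (hpre : r <+: g) (hne : r ≠ g) :
    ∃ a : ℕ, (r ++ [a]) <+: g := by
  obtain ⟨t, rfl⟩ := hpre
  cases t with
  | nil => simp at hne
  | cons a t' => exact ⟨a, t', by simp⟩

lemma not_child_prefix {r : List ℕ} {a : ℕ} : ¬ (r ++ [a]) <+: r := by
  intro h
  have := h.length_le
  simp at this

lemma child_eq_of_prefix {r c c' g : List ℕ}
    (hc : ∃ a : ℕ, c = r ++ [a]) (hc' : ∃ a : ℕ, c' = r ++ [a])
    (h1 : c <+: g) (h2 : c' <+: g) : c = c' := by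
  obtain ⟨a, rfl⟩ := hc; obtain ⟨b, rfl⟩ := hc'
  rcases List.prefix_or_prefix_of_prefix h1 h2 with h | h
  · exact h.eq_of_length_le (by simp)
  · exact (h.eq_of_length_le (by simp)).symm

lemma between_child {r h' : List ℕ} {a : ℕ} (h1 : r <+: h') (h2 : h' <+: r ++ [a]) :
    h' = r ∨ h' = r ++ [a] := by
  rcases le_or_gt h'.length r.length with hl | hl
  · exact Or.inl (h1.eq_of_length_le hl).symm
  · exact Or.inr (h2.eq_of_length_le (by simp; omega))

def RelExpand (T : Finset (List ℕ)) (r : List ℕ) (I : Finset (List ℕ)) : Prop :=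
  I ⊆ T ∧ (∀ g ∈ I, r <+: g) ∧ (∀ g ∈ I, (children T g).Nonempty) ∧
    ∀ g ∈ I, ∀ h' : List ℕ, r <+: h' → h' <+: g → h' ≠ g → h' ∈ I

noncomputable def relBoundary (T : Finset (List ℕ)) (r : List ℕ) (I : Finset (List ℕ)) :
    Finset (List ℕ) :=
  T.filter (fun g => r <+: g ∧ g ∉ I ∧
    ∀ h' : List ℕ, r <+: h' → h' <+: g → h' ≠ g → h' ∈ I)

noncomputable def relObj (T : Finset (List ℕ)) (r : List ℕ) (I : Finset (List ℕ))
    (w : List ℕ → ℝ) (lam : ℝ) : ℝ :=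
  (∑ g ∈ relBoundary T r I, w g) - lam * I.card

lemma relExpand_empty (T : Finset (List ℕ)) (r : List ℕ) : RelExpand T r ∅ :=
  ⟨empty_subset _, by simp, by simp, by simp⟩

lemma eq_empty_of_notMem {T : Finset (List ℕ)} {r : List ℕ} {I : Finset (List ℕ)}
    (hI : RelExpand T r I) (hr : r ∉ I) : I = ∅ := by
  rcases hI with ⟨-, h2, -, h4⟩
  by_contra hne
  obtain ⟨g, hg⟩ := nonempty_of_ne_empty hne
  rcases eq_or_ne r g with rfl | hrg
  · exact hr hg
  · exact hr (h4 g hg r (List.prefix_refl r) (h2 g hg) hrg)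

lemma relBoundary_empty {T : Finset (List ℕ)} {r : List ℕ} (hr : r ∈ T) :
    relBoundary T r ∅ = {r} := by
  ext g
  simp only [relBoundary, mem_filter, mem_singleton, notMem_empty, not_false_iff, true_and]
  constructor
  · rintro ⟨hgT, hpre, hmid⟩
    by_contra hne
    exact hmid r (List.prefix_refl r) hpre (Ne.symm hne)
  · rintro rfl
    exact ⟨hr, List.prefix_refl g, fun h' h1 h2 hne => absurd (h2.eq_of_length_le h1.length_le) hne⟩

lemma relObj_empty {T : Finset (List ℕ)} {r : List ℕ} (hr : r ∈ T)
    (w : List ℕ → ℝ) (lam : ℝ) : relObj T r ∅ w lam = w r := by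
  simp [relObj, relBoundary_empty hr]

lemma relExpand_filter {T : Finset (List ℕ)} {r : List ℕ} {I : Finset (List ℕ)}
    (hI : RelExpand T r I) {c : List ℕ} (hc : c ∈ children T r) :
    RelExpand T c (I.filter (fun g => c <+: g)) := by
  obtain ⟨h1, h2, h3, h4⟩ := hI
  refine ⟨(filter_subset _ _).trans h1, fun g hg => (mem_filter.1 hg).2,
    fun g hg => h3 g (mem_filter.1 hg).1, fun g hg h' hc' hg' hne => ?_⟩
  obtain ⟨hgI, hcg⟩ := mem_filter.1 hg
  obtain ⟨-, a, rfl⟩ := mem_filter.1 hc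
  exact mem_filter.2 ⟨h4 g hgI h' ((List.prefix_append r [a]).trans hc') hg' hne, hc'⟩

lemma repr_of_mem {T : Finset (List ℕ)} {hpc : ∀ h ∈ T, ∀ h' : List ℕ, h' <+: h → h' ∈ T}
    {r : List ℕ} {I : Finset (List ℕ)} (hI : RelExpand T r I) (hr : r ∈ I) :
    I = insert r ((children T r).biUnion (fun c => I.filter (fun g => c <+: g))) := by
  obtain ⟨h1, h2, h3, h4⟩ := hI
  ext g
  simp only [mem_insert, mem_biUnion, mem_filter]
  constructor
  · intro hg
    rcases eq_or_ne g r with rfl | hne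
    · exact Or.inl rfl
    · obtain ⟨a, hca⟩ := child_of_ne (h2 g hg) (Ne.symm hne)
      refine Or.inr ⟨r ++ [a], mem_filter.2 ⟨hpc g (h1 hg) _ hca, a, rfl⟩, hg, hca⟩
  · rintro (rfl | ⟨c, -, hg, -⟩)
    · exact hr
    · exact hg

lemma card_decomp {T : Finset (List ℕ)} (hpc : ∀ h ∈ T, ∀ h' : List ℕ, h' <+: h → h' ∈ T)
    {r : List ℕ} {I : Finset (List ℕ)} (hI : RelExpand T r I) (hr : r ∈ I) :
    I.card = 1 + ∑ c ∈ children T r, (I.filter (fun g => c <+: g)).card := by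
  have hdis : ∀ c ∈ children T r, ∀ c' ∈ children T r, c ≠ c' →
      Disjoint (I.filter (fun g => c <+: g)) (I.filter (fun g => c' <+: g)) := by
    intro c hc c' hc' hne
    rw [disjoint_left]
    intro g hg hg'
    exact hne (child_eq_of_prefix (mem_filter.1 hc).2 (mem_filter.1 hc').2
      (mem_filter.1 hg).2 (mem_filter.1 hg').2)
  conv_lhs => rw [repr_of_mem (hpc := hpc) hI hr]
  rw [card_insert_of_notMem, card_biUnion hdis, Nat.add_comm]
  intro hmem
  obtain ⟨c, hc, hg⟩ := mem_biUnion.1 hmem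
  obtain ⟨-, a, rfl⟩ := mem_filter.1 hc
  exact not_child_prefix (mem_filter.1 hg).2

lemma boundary_decomp {T : Finset (List ℕ)} (hpc : ∀ h ∈ T, ∀ h' : List ℕ, h' <+: h → h' ∈ T)
    {r : List ℕ} {I : Finset (List ℕ)} (hI : RelExpand T r I) (hr : r ∈ I) :
    relBoundary T r I =
      (children T r).biUnion (fun c => relBoundary T c (I.filter (fun g => c <+: g))) := by
  obtain ⟨h1, h2, h3, h4⟩ := hI
  ext g
  simp only [relBoundary, mem_biUnion, mem_filter]
  constructor
  · rintro ⟨hgT, hpre, hgI, hmid⟩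
    have hne : r ≠ g := fun h => hgI (h ▸ hr)
    obtain ⟨a, hca⟩ := child_of_ne hpre hne
    have hcT : r ++ [a] ∈ T := hpc g hgT _ hca
    refine ⟨r ++ [a], mem_filter.2 ⟨hcT, a, rfl⟩, hgT, hca, ?_, ?_⟩
    · intro hgf
      exact hgI hgf.1
    · intro h' hc' hg' hne'
      exact ⟨hmid h' ((List.prefix_append r [a]).trans hc') hg' hne', hc'⟩
  · rintro ⟨c, hc, hgT, hcg, hgI, hmid⟩
    obtain ⟨hcT, a, rfl⟩ := mem_filter.1 hc
    have hrc : r <+: r ++ [a] := List.prefix_append r [a]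
    refine ⟨hgT, hrc.trans hcg, fun hgmem => hgI ⟨hgmem, hcg⟩, ?_⟩
    intro h' hrh hhg hne
    rcases List.prefix_or_prefix_of_prefix hhg hcg with hhc | hch
    · rcases between_child hrh hhc with rfl | rfl
      · exact hr
      · rcases eq_or_ne (r ++ [a]) g with rfl | hcgne
        · exact absurd rfl hne
        · exact (hmid (r ++ [a]) (List.prefix_refl _) hcg hcgne).1
    · exact (hmid h' hch hhg hne).1

lemma relObj_decomp {T : Finset (List ℕ)} (hpc : ∀ h ∈ T, ∀ h' : List ℕ, h' <+: h → h' ∈ T)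
    {r : List ℕ} {I : Finset (List ℕ)} (hI : RelExpand T r I) (hr : r ∈ I)
    (w : List ℕ → ℝ) (lam : ℝ) :
    relObj T r I w lam =
      (∑ c ∈ children T r, relObj T c (I.filter (fun g => c <+: g)) w lam) - lam := by
  have hdisb : ∀ c ∈ children T r, ∀ c' ∈ children T r, c ≠ c' →
      Disjoint (relBoundary T c (I.filter (fun g => c <+: g)))
        (relBoundary T c' (I.filter (fun g => c' <+: g))) := by
    intro c hc c' hc' hne
    rw [disjoint_left]
    intro g hg hg'
    exact hne (child_eq_of_prefix (mem_filter.1 hc).2 (mem_filter.1 hc').2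
      (mem_filter.1 hg).2.1 (mem_filter.1 hg').2.1)
  have hcard := card_decomp hpc hI hr
  simp only [relObj, boundary_decomp hpc hI hr, sum_biUnion hdisb, hcard]
  push_cast
  rw [Finset.sum_sub_distrib, ← Finset.mul_sum]
  ring

lemma combine {T : Finset (List ℕ)} {r : List ℕ} (hrT : r ∈ T)
    (hch : (children T r).Nonempty) (J : List ℕ → Finset (List ℕ))
    (hJ : ∀ c ∈ children T r, RelExpand T c (J c)) :
    RelExpand T r (insert r ((children T r).biUnion J)) ∧
      r ∈ insert r ((children T r).biUnion J) ∧
      ∀ c ∈ children T r,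
        (insert r ((children T r).biUnion J)).filter (fun g => c <+: g) = J c := by
  have hpre : ∀ c ∈ children T r, r <+: c := by
    intro c hc
    obtain ⟨-, a, rfl⟩ := mem_filter.1 hc
    exact List.prefix_append r [a]
  refine ⟨⟨?_, ?_, ?_, ?_⟩, mem_insert_self r _, ?_⟩
  · refine insert_subset hrT (biUnion_subset.2 fun c hc => (hJ c hc).1)
  · intro g hg
    rcases mem_insert.1 hg with rfl | hg
    · exact List.prefix_refl g
    · obtain ⟨c, hc, hgc⟩ := mem_biUnion.1 hg
      exact (hpre c hc).trans ((hJ c hc).2.1 g hgc)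
  · intro g hg
    rcases mem_insert.1 hg with rfl | hg
    · exact hch
    · obtain ⟨c, hc, hgc⟩ := mem_biUnion.1 hg
      exact (hJ c hc).2.2.1 g hgc
  · intro g hg h' hrh hhg hne
    rcases mem_insert.1 hg with rfl | hg
    · exact absurd (hhg.eq_of_length_le hrh.length_le) hne
    · obtain ⟨c, hc, hgc⟩ := mem_biUnion.1 hg
      have hcg : c <+: g := (hJ c hc).2.1 g hgc
      rcases List.prefix_or_prefix_of_prefix hhg hcg with hhc | hch'
      · obtain ⟨-, a, rfl⟩ := mem_filter.1 hc
        rcases between_child hrh hhc with rfl | rfl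
        · exact mem_insert_self _ _
        · rcases eq_or_ne (r ++ [a]) g with rfl | hcgne
          · exact absurd rfl hne
          · exact mem_insert_of_mem (mem_biUnion.2 ⟨r ++ [a], hc,
              (hJ _ hc).2.2.2 g hgc _ (List.prefix_refl _) hcg hcgne⟩)
      · exact mem_insert_of_mem (mem_biUnion.2 ⟨c, hc,
          (hJ c hc).2.2.2 g hgc h' hch' hhg hne⟩)
  · intro c hc
    ext g
    simp only [mem_filter, mem_insert, mem_biUnion]
    constructor
    · rintro ⟨rfl | ⟨c', hc', hgc'⟩, hcg⟩
      · obtain ⟨-, a, rfl⟩ := mem_filter.1 hc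
        exact absurd hcg not_child_prefix
      · rwa [child_eq_of_prefix (mem_filter.1 hc).2 (mem_filter.1 hc').2 hcg
          ((hJ c' hc').2.1 g hgc')]
    · intro hg
      exact ⟨Or.inr ⟨c, hc, hg⟩, (hJ c hc).2.1 g hg⟩

lemma key (T : Finset (List ℕ))
    (hpc : ∀ h ∈ T, ∀ h' : List ℕ, h' <+: h → h' ∈ T)
    (w : List ℕ → ℝ) (lam : ℝ) (bestvalue : List ℕ → ℝ)
    (hleaf : ∀ h ∈ T, children T h = ∅ → bestvalue h = w h)
    (hnode : ∀ h ∈ T, (children T h).Nonempty →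
      bestvalue h = max ((∑ h' ∈ children T h, bestvalue h') - lam) (w h)) :
    ∀ n : ℕ, ∀ r ∈ T, (T.filter (fun g => r <+: g)).card ≤ n →
      IsGreatest {x : ℝ | ∃ I, RelExpand T r I ∧ x = relObj T r I w lam} (bestvalue r) := by
  intro n
  induction n with
  | zero =>
    intro r hr hcard
    exfalso
    have h1 : r ∈ T.filter (fun g => r <+: g) := mem_filter.2 ⟨hr, List.prefix_refl r⟩
    have := card_pos.2 ⟨r, h1⟩
    omega
  | succ n ih =>
    intro r hr hcard
    have hmeas : ∀ c ∈ children T r, (T.filter (fun g => c <+: g)).card ≤ n := by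
      intro c hc
      obtain ⟨hcT, a, rfl⟩ := mem_filter.1 hc
      have hss : T.filter (fun g => (r ++ [a]) <+: g) ⊂ T.filter (fun g => r <+: g) := by
        refine ⟨fun g hg => ?_, fun hsub => ?_⟩
        · obtain ⟨hgT, hcg⟩ := mem_filter.1 hg
          exact mem_filter.2 ⟨hgT, (List.prefix_append r [a]).trans hcg⟩
        · have := mem_filter.1 (hsub (mem_filter.2 ⟨hr, List.prefix_refl r⟩))
          exact not_child_prefix this.2
      have := card_lt_card hss
      omega
    have hwle : w r ≤ bestvalue r := by
      rcases eq_or_ne (children T r) ∅ with he | hne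
      · exact (hleaf r hr he).ge
      · rw [hnode r hr (nonempty_of_ne_empty hne)]
        exact le_max_right _ _
    constructor
    · rcases eq_or_ne (children T r) ∅ with he | hne
      · exact ⟨∅, relExpand_empty T r, by rw [relObj_empty hr, hleaf r hr he]⟩
      · have hch := nonempty_of_ne_empty hne
        rcases le_or_gt ((∑ c ∈ children T r, bestvalue c) - lam) (w r) with hle | hlt
        · refine ⟨∅, relExpand_empty T r, ?_⟩
          rw [relObj_empty hr, hnode r hr hch, max_eq_right hle]
        · have H : ∀ c ∈ children T r,
              ∃ Ic, RelExpand T c Ic ∧ bestvalue c = relObj T c Ic w lam :=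
            fun c hc => (ih c ((filter_subset _ _) hc) (hmeas c hc)).1
          choose! J hJ1 hJ2 using H
          obtain ⟨hRE, hrI, hfilt⟩ := combine hr hch J hJ1
          refine ⟨_, hRE, ?_⟩
          have hsum : (∑ c ∈ children T r, relObj T c
                ((insert r ((children T r).biUnion J)).filter (fun g => c <+: g)) w lam) =
              ∑ c ∈ children T r, bestvalue c :=
            Finset.sum_congr rfl fun c hc => by rw [hfilt c hc, ← hJ2 c hc]
          rw [relObj_decomp hpc hRE hrI, hsum, hnode r hr hch, max_eq_left hlt.le]
    · rintro x ⟨I, hI, rfl⟩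
      by_cases hrI : r ∈ I
      · have hch := hI.2.2.1 r hrI
        rw [relObj_decomp hpc hI hrI]
        have hle : ∀ c ∈ children T r,
            relObj T c (I.filter (fun g => c <+: g)) w lam ≤ bestvalue c :=
          fun c hc => (ih c ((filter_subset _ _) hc) (hmeas c hc)).2
            ⟨_, relExpand_filter hI hc, rfl⟩
        calc (∑ c ∈ children T r, relObj T c (I.filter (fun g => c <+: g)) w lam) - lam
            ≤ (∑ c ∈ children T r, bestvalue c) - lam :=
              sub_le_sub_right (Finset.sum_le_sum hle) lam
          _ ≤ bestvalue r := by rw [hnode r hr hch]; exact le_max_left _ _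
      · rw [eq_empty_of_notMem hI hrI, relObj_empty hr]
        exact hwle

/-- `I` is a valid set of expanded ("internal") nodes of a stopping subtree:
every expanded node is a non-leaf of `T`, and all strict ancestors of an
expanded node are expanded (so it is actually reached). -/
def ExpandSet (T I : Finset (List ℕ)) : Prop :=
  I ⊆ T ∧ (∀ h ∈ I, (children T h).Nonempty) ∧
    ∀ h ∈ I, ∀ h' : List ℕ, h' <+: h → h' ≠ h → h' ∈ I

/-- The boundary of a stopping subtree with expanded set `I`: nodes reached
(all strict ancestors expanded) but not expanded themselves. -/
noncomputable def boundary (T I : Finset (List ℕ)) : Finset (List ℕ) :=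
  T.filter (fun h => h ∉ I ∧ ∀ h' : List ℕ, h' <+: h → h' ≠ h → h' ∈ I)

/-- Objective of the stopping subtree with expanded set `I`: collected weights
at the boundary minus `λ` per expanded node. -/
noncomputable def objVal (T I : Finset (List ℕ)) (w : List ℕ → ℝ) (lam : ℝ) : ℝ :=
  (∑ h ∈ boundary T I, w h) - lam * I.card

/-- Correctness of the dynamic program of Algorithm 1: `bestvalue(root)` equals
the maximum, over all stopping subtrees (expanded sets `I`), of the boundary
weight minus `λ·|I|`. -/
theorem bestvalue_correct (T : Finset (List ℕ)) (hroot : [] ∈ T)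
    (hpc : ∀ h ∈ T, ∀ h' : List ℕ, h' <+: h → h' ∈ T)
    (w : List ℕ → ℝ) (hw : ∀ h ∈ T, w h ∈ Set.Icc (0 : ℝ) 1)
    (lam : ℝ) (hlam : 0 < lam)
    (bestvalue : List ℕ → ℝ)
    (hleaf : ∀ h ∈ T, children T h = ∅ → bestvalue h = w h)
    (hnode : ∀ h ∈ T, (children T h).Nonempty →
      bestvalue h = max ((∑ h' ∈ children T h, bestvalue h') - lam) (w h)) :
    IsGreatest {x : ℝ | ∃ I : Finset (List ℕ), ExpandSet T I ∧ x = objVal T I w lam}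
      (bestvalue []) := by

  have hkey := key T hpc w lam bestvalue hleaf hnode
    (T.filter (fun g => [] <+: g)).card [] hroot le_rfl
  have hb : ∀ I : Finset (List ℕ), boundary T I = relBoundary T [] I := by
    intro I
    ext g
    simp [boundary, relBoundary, List.nil_prefix]
  have hset : {x : ℝ | ∃ I : Finset (List ℕ), ExpandSet T I ∧ x = objVal T I w lam} =
      {x : ℝ | ∃ I, RelExpand T [] I ∧ x = relObj T [] I w lam} := by
    ext x
    simp only [Set.mem_setOf_eq]
    constructor
    · rintro ⟨I, ⟨h1, h2, h3⟩, rfl⟩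
      exact ⟨I, ⟨h1, fun g _ => List.nil_prefix, h2, fun g hg h' _ => h3 g hg h'⟩,
        by simp only [objVal, relObj, hb I]⟩
    · rintro ⟨I, ⟨h1, h2, h3, h4⟩, rfl⟩
      exact ⟨I, ⟨h1, h3, fun g hg h' => h4 g hg h' List.nil_prefix⟩,
        by simp only [objVal, relObj, hb I]⟩
  rw [hset]
  exact hkey
end

section
/- In a finite rooted tree with reachability probabilities π and depth ≤ L, suppose an optimal stopping subtree (as in the previous statement, with w(h) = u(h)·π(h) for values u(h) ∈ [0,1] and cost λ per expanded node) exists. Then there is an optimal stopping subtree in which every expanded node h satisfies π(h) ≥ λ. -/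
open Finset
open scoped Classical

/-- Each proper descendant of `h` in `T` passes through a child of `h`. -/
lemma take_child {T : Finset (List ℕ)} {π : List ℕ → ℝ} (hT : TreeProb T π)
    {h b : List ℕ} (hbT : b ∈ T) (hpre : h <+: b) (hne : h ≠ b) :
    b.take (h.length + 1) ∈ children T h ∧ b.take (h.length + 1) <+: b := by
  obtain ⟨t, rfl⟩ := hpre
  cases t with
  | nil => simp at hne
  | cons a t' =>
    have htake : (h ++ a :: t').take (h.length + 1) = h ++ [a] := by
      simp [List.take_append]
    refine ⟨?_, ?_⟩
    · rw [htake]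
      exact Finset.mem_filter.mpr
        ⟨hT.prefix_closed _ hbT _ ⟨t', by simp⟩, a, rfl⟩
    · rw [htake]; exact ⟨t', by simp⟩

/-- An antichain of descendants of `h` has total probability at most `π h`. -/
lemma antichain_sum (T : Finset (List ℕ)) (π : List ℕ → ℝ) (hT : TreeProb T π) :
    ∀ n : ℕ, ∀ h, h ∈ T → ∀ S : Finset (List ℕ), S ⊆ T →
      (∀ b ∈ S, h <+: b) →
      (∀ b ∈ S, ∀ b' ∈ S, b <+: b' → b = b') →
      (∀ b ∈ S, b.length ≤ h.length + n) →
      ∑ b ∈ S, π b ≤ π h := by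
  intro n
  induction n with
  | zero =>
    intro h hhT S hST hpre _ hlen
    have hsub : S ⊆ {h} := by
      intro b hb
      simp only [Finset.mem_singleton]
      exact ((hpre b hb).eq_of_length
        (le_antisymm (hpre b hb).length_le (hlen b hb))).symm
    calc ∑ b ∈ S, π b ≤ ∑ b ∈ ({h} : Finset (List ℕ)), π b := by
          refine Finset.sum_le_sum_of_subset_of_nonneg hsub ?_
          intro i hi _
          simp only [Finset.mem_singleton] at hi
          simpa [hi] using hT.nonneg h hhT
      _ = π h := Finset.sum_singleton _ _
  | succ n ih =>
    intro h hhT S hST hpre hanti hlen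
    by_cases hhS : h ∈ S
    · have hSeq : S = {h} := by
        ext b
        simp only [Finset.mem_singleton]
        constructor
        · intro hb; exact (hanti h hhS b hb (hpre b hb)).symm
        · rintro rfl; exact hhS
      simp [hSeq]
    rcases S.eq_empty_or_nonempty with rfl | ⟨b₀, hb₀⟩
    · simpa using hT.nonneg h hhT
    have hchild : ∀ b ∈ S, b.take (h.length + 1) ∈ children T h ∧
        b.take (h.length + 1) <+: b := by
      intro b hb
      exact take_child hT (hST hb) (hpre b hb) (fun he => hhS (he ▸ hb))
    have hne : (children T h).Nonempty := ⟨_, (hchild b₀ hb₀).1⟩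
    rw [← Finset.sum_fiberwise_of_maps_to (fun b hb => (hchild b hb).1) π,
      hT.internal_sum h hhT hne]
    apply Finset.sum_le_sum
    intro c hc
    have hcT : c ∈ T := (Finset.mem_filter.mp hc).1
    obtain ⟨a, rfl⟩ := (Finset.mem_filter.mp hc).2
    refine ih _ hcT _ ((Finset.filter_subset _ _).trans hST) ?_ ?_ ?_
    · intro b hb
      have hb' := Finset.mem_filter.mp hb
      exact hb'.2 ▸ (hchild b hb'.1).2
    · intro b hb b' hb' hpp
      exact hanti b (Finset.mem_filter.mp hb).1 b' (Finset.mem_filter.mp hb').1 hpp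
    · intro b hb
      have := hlen b (Finset.mem_filter.mp hb).1
      simp only [List.length_append, List.length_singleton]
      omega

/-- If an optimal stopping subtree exists (weights `w(h) = u(h)·π(h)` with
values `u(h) ∈ [0,1]` and cost `λ` per expanded node), then there is an optimal
stopping subtree in which every expanded node `h` satisfies `π(h) ≥ λ`. -/
theorem optimal_expand_high_prob (T : Finset (List ℕ)) (π : List ℕ → ℝ)
    (hT : TreeProb T π) (u : List ℕ → ℝ) (hu : ∀ h ∈ T, u h ∈ Set.Icc (0 : ℝ) 1)
    (lam : ℝ) (hlam : 0 < lam)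
    (I₀ : Finset (List ℕ)) (hI₀ : ExpandSet T I₀)
    (hopt : ∀ I : Finset (List ℕ), ExpandSet T I →
      objVal T I (fun h => u h * π h) lam ≤ objVal T I₀ (fun h => u h * π h) lam) :
    ∃ I : Finset (List ℕ), ExpandSet T I ∧
      (∀ I' : Finset (List ℕ), ExpandSet T I' →
        objVal T I' (fun h => u h * π h) lam ≤ objVal T I (fun h => u h * π h) lam) ∧
      ∀ h ∈ I, lam ≤ π h := by
  classical
  refine ⟨I₀, hI₀, hopt, ?_⟩
  intro h hh
  by_contra hlt
  push_neg at hlt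
  obtain ⟨hsub, hnl, hcl⟩ := hI₀
  have hhT : h ∈ T := hsub hh
  set w : List ℕ → ℝ := fun x => u x * π x with hwdef
  set I' : Finset (List ℕ) := I₀.filter (fun b => ¬ h <+: b) with hI'def
  have hI'sub : I' ⊆ I₀ := Finset.filter_subset _ _
  have hI'E : ExpandSet T I' := by
    refine ⟨hI'sub.trans hsub, fun b hb => hnl b (hI'sub hb), ?_⟩
    intro b hb h' hp hne
    have hb' := Finset.mem_filter.mp hb
    refine Finset.mem_filter.mpr ⟨hcl b hb'.1 h' hp hne, ?_⟩
    intro hhp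
    exact hb'.2 (hhp.trans hp)
  have hhI' : h ∉ I' := by
    intro hmem
    exact (Finset.mem_filter.mp hmem).2 (List.prefix_refl h)
  set B : Finset (List ℕ) := boundary T I₀ with hBdef
  set D : Finset (List ℕ) := B.filter (fun b => h <+: b) with hDdef
  have hDB : D ⊆ B := Finset.filter_subset _ _
  have hhB : h ∉ B := fun hmem => (Finset.mem_filter.mp hmem).2.1 hh
  -- boundary of the pruned set
  have hbd : boundary T I' = insert h (B \ D) := by
    ext b
    simp only [Finset.mem_insert, Finset.mem_sdiff]
    constructor
    · intro hb
      obtain ⟨hbT, hbI', hanc⟩ := Finset.mem_filter.mp hb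
      by_cases hhb : h <+: b
      · left
        by_contra hne
        have : h ∈ I' := hanc h hhb (Ne.symm hne)
        exact (Finset.mem_filter.mp this).2 (List.prefix_refl h)
      · right
        have hbI₀ : b ∉ I₀ := by
          intro hmem
          exact hbI' (Finset.mem_filter.mpr ⟨hmem, hhb⟩)
        have hbB : b ∈ B := Finset.mem_filter.mpr
          ⟨hbT, hbI₀, fun h' hp hne => hI'sub (hanc h' hp hne)⟩
        exact ⟨hbB, fun hmem => hhb (Finset.mem_filter.mp hmem).2⟩
    · rintro (rfl | ⟨hbB, hbD⟩)
      · refine Finset.mem_filter.mpr ⟨hhT, hhI', ?_⟩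
        intro h' hp hne
        refine Finset.mem_filter.mpr ⟨hcl b hh h' hp hne, ?_⟩
        intro hhp
        exact hne ((hhp.eq_of_length
          (le_antisymm hhp.length_le hp.length_le)).symm)
      · obtain ⟨hbT, hbI₀, hanc⟩ := Finset.mem_filter.mp hbB
        have hhb : ¬ h <+: b := fun hp => hbD (Finset.mem_filter.mpr ⟨hbB, hp⟩)
        refine Finset.mem_filter.mpr ⟨hbT, ?_, ?_⟩
        · intro hmem; exact hbI₀ (hI'sub hmem)
        · intro h' hp hne
          refine Finset.mem_filter.mpr ⟨hanc h' hp hne, ?_⟩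
          intro hhp
          exact hhb (hhp.trans hp)
  -- bound the lost boundary weight
  have hDsum : ∑ b ∈ D, w b ≤ π h := by
    have h1 : ∑ b ∈ D, w b ≤ ∑ b ∈ D, π b := by
      refine Finset.sum_le_sum ?_
      intro b hb
      have hbT : b ∈ T := (Finset.mem_filter.mp (hDB hb)).1
      have hub := hu b hbT
      have hπb := hT.nonneg b hbT
      calc u b * π b ≤ 1 * π b := mul_le_mul_of_nonneg_right hub.2 hπb
        _ = π b := one_mul _
    have h2 : ∑ b ∈ D, π b ≤ π h := by
      refine antichain_sum T π hT (T.sup List.length) h hhT D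
        (fun b hb => (Finset.mem_filter.mp (hDB hb)).1) ?_ ?_ ?_
      · intro b hb; exact (Finset.mem_filter.mp hb).2
      · intro b hb b' hb' hpp
        by_contra hne
        have hbB' := Finset.mem_filter.mp (hDB hb')
        exact (Finset.mem_filter.mp (hDB hb)).2.1 (hbB'.2.2 b hpp hne)
      · intro b hb
        have : b.length ≤ T.sup List.length :=
          Finset.le_sup (Finset.mem_filter.mp (hDB hb)).1
        omega
    linarith
  have hwh : 0 ≤ w h := mul_nonneg (hu h hhT).1 (hT.nonneg h hhT)
  -- cardinality drop
  have hcard : (I'.card : ℝ) + 1 ≤ (I₀.card : ℝ) := by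
    have : I'.card < I₀.card := Finset.card_lt_card ⟨hI'sub, fun hs => hhI' (hs hh)⟩
    exact_mod_cast this
  -- compare objectives
  have hsplit : ∑ b ∈ B, w b = ∑ b ∈ B \ D, w b + ∑ b ∈ D, w b :=
    (Finset.sum_sdiff hDB).symm
  have hbsum : ∑ b ∈ boundary T I', w b = w h + ∑ b ∈ B \ D, w b := by
    rw [hbd, Finset.sum_insert (fun hmem => hhB (Finset.mem_sdiff.mp hmem).1)]
  have hobj := hopt I' hI'E
  have hlam' : lam * (I'.card : ℝ) + lam ≤ lam * (I₀.card : ℝ) := by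
    nlinarith
  simp only [objVal, hbsum, hsplit] at hobj
  nlinarith
end
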